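/- For each fixed angle ψ with cos ψ ≠ 0 or sin ψ ≠ 0, the function p ↦ F_p(ψ) = ((8p−4) cos²ψ + (5p−7) sin²ψ)/(4 cos²ψ + (p−1) sin²ψ) is strictly increasing on (1, ∞); explicitly, its derivative in p equals (18 cos⁴ψ + 12 cos²ψ + 2)/((−p+5) cos²ψ + p−1)², which is strictly positive. -/

import Mathlib

open Real

noncomputable def Fp (p ψ : ℝ) : ℝ :=
  ((8 * p - 4) * cos ψ ^ 2 + (5 * p - 7) * sin ψ ^ 2) /
    (4 * cos ψ ^ 2 + (p - 1) * sin ψ ^ 2)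

theorem stmt_1 (ψ : ℝ) (hψ : cos ψ ≠ 0 ∨ sin ψ ≠ 0) :
    StrictMonoOn (fun p : ℝ => Fp p ψ) (Set.Ioi 1) ∧
    ∀ p : ℝ, 1 < p →
      HasDerivAt (fun q : ℝ => Fp q ψ)
        ((18 * cos ψ ^ 4 + 12 * cos ψ ^ 2 + 2) /
          ((-p + 5) * cos ψ ^ 2 + p - 1) ^ 2) p ∧
      0 < (18 * cos ψ ^ 4 + 12 * cos ψ ^ 2 + 2) /
          ((-p + 5) * cos ψ ^ 2 + p - 1) ^ 2 := by
  have hs : sin ψ ^ 2 = 1 - cos ψ ^ 2 := by nlinarith [sin_sq_add_cos_sq ψ]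
  have hc0 : (0:ℝ) ≤ cos ψ ^ 2 := sq_nonneg _
  have hc1 : cos ψ ^ 2 ≤ 1 := by nlinarith [sq_nonneg (sin ψ)]
  have hDpos : ∀ p : ℝ, 1 < p → 0 < 4 * cos ψ ^ 2 + (p - 1) * sin ψ ^ 2 := by
    intro p hp
    rw [hs]
    rcases le_or_gt (p - 1) 4 with h | h
    · nlinarith [mul_nonneg (sub_nonneg.mpr hp.le) hc0]
    · nlinarith [mul_nonneg (by linarith : (0:ℝ) ≤ p - 5) (sub_nonneg.mpr hc1)]
  have hderiv : ∀ p : ℝ, 1 < p →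
      HasDerivAt (fun q : ℝ => Fp q ψ)
        ((18 * cos ψ ^ 4 + 12 * cos ψ ^ 2 + 2) /
          ((-p + 5) * cos ψ ^ 2 + p - 1) ^ 2) p := by
    intro p hp
    have hN : HasDerivAt (fun q : ℝ => (8 * q - 4) * cos ψ ^ 2 + (5 * q - 7) * sin ψ ^ 2)
        (8 * cos ψ ^ 2 + 5 * sin ψ ^ 2) p := by
      have h1 : HasDerivAt (fun q : ℝ => (8 * q - 4) * cos ψ ^ 2) (8 * cos ψ ^ 2) p := by
        simpa using (((hasDerivAt_id p).const_mul 8).sub_const 4).mul_const (cos ψ ^ 2)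
      have h2 : HasDerivAt (fun q : ℝ => (5 * q - 7) * sin ψ ^ 2) (5 * sin ψ ^ 2) p := by
        simpa using (((hasDerivAt_id p).const_mul 5).sub_const 7).mul_const (sin ψ ^ 2)
      exact h1.add h2
    have hDd : HasDerivAt (fun q : ℝ => 4 * cos ψ ^ 2 + (q - 1) * sin ψ ^ 2)
        (sin ψ ^ 2) p := by
      simpa using (((hasDerivAt_id p).sub_const 1).mul_const (sin ψ ^ 2)).const_add
        (4 * cos ψ ^ 2)
    have hD := (hDpos p hp).ne'
    have h := hN.div hDd hD
    refine h.congr_deriv ?_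
    have hD' : (-p + 5) * cos ψ ^ 2 + p - 1 = 4 * cos ψ ^ 2 + (p - 1) * sin ψ ^ 2 := by
      rw [hs]; ring
    rw [hD']
    congr 1
    rw [hs]; ring
  have hpos : ∀ p : ℝ, 1 < p →
      0 < (18 * cos ψ ^ 4 + 12 * cos ψ ^ 2 + 2) /
        ((-p + 5) * cos ψ ^ 2 + p - 1) ^ 2 := by
    intro p hp
    have hD' : (-p + 5) * cos ψ ^ 2 + p - 1 = 4 * cos ψ ^ 2 + (p - 1) * sin ψ ^ 2 := by
      rw [hs]; ring
    apply div_pos (by positivity)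
    rw [hD']
    exact pow_pos (hDpos p hp) 2
  refine ⟨?_, fun p hp => ⟨hderiv p hp, hpos p hp⟩⟩
  apply strictMonoOn_of_deriv_pos (convex_Ioi 1)
  · intro p hp
    exact ((hderiv p hp).differentiableAt.continuousAt).continuousWithinAt
  · intro p hp
    rw [interior_Ioi] at hp
    rw [(hderiv p hp).deriv]
    exact hpos p hp
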